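/- Let Y be a finite nonempty set, let D be a set of extended real variables on Y containing all bounded below ones, and let E̅* : D → ℝ̄ be any map. Then E̅* is an upper expectation on D if and only if there exists a coherent upper prevision E̅ on the set of all gambles on Y such that E̅*(f) = lim_{c→+∞} E̅(f^{∧c}) for every bounded below extended real variable f on Y (this limit exists since E̅(f^{∧c}) is non-decreasing in c). -/

import Mathlib

open Filter Topology

noncomputable section

/-- Addition on the extended reals with the convention `(+∞) + (−∞) = (−∞) + (+∞) = +∞`. -/
def eadd (a b : EReal) : EReal := if a = ⊤ ∨ b = ⊤ then ⊤ else a + b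

/-- An extended real variable is bounded below. -/
def BddBelowF {Y : Type*} (f : Y → EReal) : Prop := ∃ M : ℝ, ∀ y, (M : EReal) ≤ f y

/-- (E1): constants are preserved. -/
def UE1 {Y : Type*} (E : (Y → EReal) → EReal) : Prop :=
  ∀ c : ℝ, E (fun _ => (c : EReal)) = (c : EReal)

/-- (E2): sub-additivity on bounded below variables. -/
def UE2 {Y : Type*} (E : (Y → EReal) → EReal) : Prop :=
  ∀ f g : Y → EReal, BddBelowF f → BddBelowF g →
    E (fun y => eadd (f y) (g y)) ≤ eadd (E f) (E g)

/-- (E3): positive homogeneity on bounded below variables. -/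
def UE3 {Y : Type*} (E : (Y → EReal) → EReal) : Prop :=
  ∀ l : ℝ, 0 < l → ∀ f : Y → EReal, BddBelowF f →
    E (fun y => (l : EReal) * f y) = (l : EReal) * E f

/-- (E4): monotonicity on bounded below variables. -/
def UE4 {Y : Type*} (E : (Y → EReal) → EReal) : Prop :=
  ∀ f g : Y → EReal, BddBelowF f → BddBelowF g → (∀ y, f y ≤ g y) → E f ≤ E g

/-- (E5): continuity with respect to non-decreasing sequences of non-negative variables. -/
def UE5 {Y : Type*} (E : (Y → EReal) → EReal) : Prop :=
  ∀ (fs : ℕ → Y → EReal) (f : Y → EReal),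
    (∀ n y, 0 ≤ fs n y) → (∀ n y, fs n y ≤ fs (n + 1) y) →
    (∀ y, Tendsto (fun n => fs n y) atTop (𝓝 (f y))) →
    Tendsto (fun n => E (fs n)) atTop (𝓝 (E f))

/-- An upper expectation: a map satisfying (E1)–(E5). -/
def IsUpperExpectation {Y : Type*} (E : (Y → EReal) → EReal) : Prop :=
  UE1 E ∧ UE2 E ∧ UE3 E ∧ UE4 E ∧ UE5 E

/-- A coherent upper prevision on the gambles on a finite set `Y` (every real-valued
function on a finite set is a gamble): (C1)–(C3). -/
def IsCoherentUpperPrevision {Y : Type*} [Fintype Y] [Nonempty Y] (P : (Y → ℝ) → ℝ) : Prop :=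
  (∀ f : Y → ℝ, P f ≤ ⨆ y, f y) ∧
  (∀ f g : Y → ℝ, P (fun y => f y + g y) ≤ P f + P g) ∧
  (∀ l : ℝ, 0 < l → ∀ f : Y → ℝ, P (fun y => l * f y) = l * P f)

/-! ### Auxiliary lemmas -/

section Aux

variable {Y : Type*}

/-- The truncation ("upper cut") of an extended real variable, as a real variable. -/
def cutF (f : Y → EReal) (c : ℝ) : Y → ℝ := fun y => (min (f y) (c : EReal)).toReal

lemma cut_ne_top (x : EReal) (c : ℝ) : min x (c : EReal) ≠ ⊤ :=
  ne_top_of_le_ne_top (EReal.coe_ne_top c) (min_le_right _ _)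

lemma cut_ne_bot {M : ℝ} {x : EReal} (h : (M : EReal) ≤ x) (c : ℝ) :
    min x (c : EReal) ≠ ⊥ := by
  have : ((min M c : ℝ) : EReal) ≤ min x (c : EReal) :=
    le_min (le_trans (EReal.coe_le_coe_iff.2 (min_le_left _ _)) h)
      (EReal.coe_le_coe_iff.2 (min_le_right _ _))
  exact ((EReal.bot_lt_coe _).trans_le this).ne'

lemma coe_cutF {f : Y → EReal} {M : ℝ} (hM : ∀ y, (M : EReal) ≤ f y) (c : ℝ) (y : Y) :
    ((cutF f c y : ℝ) : EReal) = min (f y) (c : EReal) :=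
  EReal.coe_toReal (cut_ne_top _ _) (cut_ne_bot (hM y) _)

lemma eadd_eq_add {a b : EReal} (ha : a ≠ ⊥) (hb : b ≠ ⊥) : eadd a b = a + b := by
  unfold eadd
  split_ifs with h
  · rcases h with h | h
    · rw [h, EReal.top_add_of_ne_bot hb]
    · rw [h, EReal.add_top_of_ne_bot ha]
  · rfl

lemma eadd_coe_right (a : EReal) (r : ℝ) : eadd a (r : EReal) = a + (r : EReal) := by
  unfold eadd
  split_ifs with h
  · rcases h with h | h
    · rw [h, EReal.top_add_coe]
    · exact absurd h (EReal.coe_ne_top r)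
  · rfl

lemma ereal_sub_le_sub {a b : EReal} (c : ℝ) (h : a ≤ b) : a - (c : EReal) ≤ b - c := by
  rw [sub_eq_add_neg, sub_eq_add_neg]
  exact add_le_add h le_rfl

lemma ereal_le_of_sub_le_sub {a b : EReal} (c : ℝ) (h : a - (c : EReal) ≤ b - c) : a ≤ b := by
  have := add_le_add h (le_refl (c : EReal))
  rwa [EReal.sub_add_cancel, EReal.sub_add_cancel] at this

/-- Tendsto of natural cast to `⊤` in `EReal`. -/
lemma tendsto_natCast_ereal_top :
    Tendsto (fun n : ℕ => ((n : ℝ) : EReal)) atTop (𝓝 ⊤) := by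
  rw [EReal.tendsto_nhds_top_iff_real]
  intro x
  obtain ⟨N, hN⟩ := exists_nat_gt x
  filter_upwards [eventually_ge_atTop N] with n hn
  exact_mod_cast hN.trans_le (by exact_mod_cast hn)

end Aux

/-- a map `E⋆` on a domain `D` containing all bounded below variables is an
upper expectation if and only if it is, on the bounded below variables, obtained from some
coherent upper prevision on the gambles by continuity with respect to upper cuts (E14). -/
theorem stmt1 {Y : Type*} [Fintype Y] [Nonempty Y]
    (D : Set (Y → EReal)) (hD : ∀ f, BddBelowF f → f ∈ D)
    (Estar : (Y → EReal) → EReal) :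
    IsUpperExpectation Estar ↔
      ∃ P : (Y → ℝ) → ℝ, IsCoherentUpperPrevision P ∧
        ∀ f : Y → EReal, BddBelowF f →
          Tendsto (fun c : ℝ => ((P (fun y => (min (f y) (c : EReal)).toReal)) : EReal))
            atTop (𝓝 (Estar f)) := by
  constructor
  · -- Forward direction
    rintro ⟨h1, h2, h3, h4, h5⟩
    -- bounds on real-valued variables
    have hbddR : ∀ f : Y → ℝ, BddBelowF (fun y => (f y : EReal)) := by
      intro f
      refine ⟨⨅ y, f y, fun y => EReal.coe_le_coe_iff.2 ?_⟩
      exact ciInf_le (Set.Finite.bddBelow (Set.finite_range f)) y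
    have hupper : ∀ f : Y → ℝ, Estar (fun y => (f y : EReal)) ≤ ((⨆ y, f y : ℝ) : EReal) := by
      intro f
      have := h4 (fun y => (f y : EReal)) (fun _ => ((⨆ y, f y : ℝ) : EReal)) (hbddR f)
        ⟨⨆ y, f y, fun _ => le_rfl⟩
        (fun y => EReal.coe_le_coe_iff.2 (le_ciSup (Set.Finite.bddAbove (Set.finite_range f)) y))
      rwa [h1] at this
    have hlower : ∀ f : Y → ℝ, (((⨅ y, f y : ℝ) : EReal)) ≤ Estar (fun y => (f y : EReal)) := by
      intro f
      have := h4 (fun _ => ((⨅ y, f y : ℝ) : EReal)) (fun y => (f y : EReal))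
        ⟨⨅ y, f y, fun _ => le_rfl⟩ (hbddR f)
        (fun y => EReal.coe_le_coe_iff.2 (ciInf_le (Set.Finite.bddBelow (Set.finite_range f)) y))
      rwa [h1] at this
    set P : (Y → ℝ) → ℝ := fun f => (Estar (fun y => (f y : EReal))).toReal with hPdef
    have hne_top : ∀ f : Y → ℝ, Estar (fun y => (f y : EReal)) ≠ ⊤ :=
      fun f => ne_top_of_le_ne_top (EReal.coe_ne_top _) (hupper f)
    have hne_bot : ∀ f : Y → ℝ, Estar (fun y => (f y : EReal)) ≠ ⊥ :=
      fun f => ((EReal.bot_lt_coe _).trans_le (hlower f)).ne'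
    have hPcoe : ∀ f : Y → ℝ, ((P f : ℝ) : EReal) = Estar (fun y => (f y : EReal)) :=
      fun f => EReal.coe_toReal (hne_top f) (hne_bot f)
    -- the shift lemma
    have hshift_half : ∀ (f : Y → EReal), BddBelowF f → ∀ r : ℝ,
        Estar (fun y => f y + (r : EReal)) ≤ Estar f + (r : EReal) := by
      intro f hf r
      have := h2 f (fun _ => (r : EReal)) hf ⟨r, fun _ => le_rfl⟩
      rw [h1 r] at this
      simpa only [eadd_coe_right] using this
    have hshift : ∀ (f : Y → EReal), BddBelowF f → ∀ r : ℝ,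
        Estar (fun y => f y + (r : EReal)) = Estar f + (r : EReal) := by
      intro f hf r
      refine le_antisymm (hshift_half f hf r) ?_
      obtain ⟨M, hM⟩ := hf
      have hbdd2 : BddBelowF (fun y => f y + (r : EReal)) :=
        ⟨M + r, fun y => by rw [EReal.coe_add]; exact add_le_add (hM y) le_rfl⟩
      have h' := hshift_half (fun y => f y + (r : EReal)) hbdd2 (-r)
      have heq : (fun y => (f y + (r : EReal)) + ((-r : ℝ) : EReal)) = f := by
        funext y
        rw [EReal.coe_neg, ← sub_eq_add_neg, EReal.add_sub_cancel_right]
      rw [heq] at h'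
      have := add_le_add h' (le_refl ((r : ℝ) : EReal))
      rwa [add_assoc, ← EReal.coe_add, neg_add_cancel, EReal.coe_zero, add_zero] at this
    refine ⟨P, ⟨?_, ?_, ?_⟩, ?_⟩
    · -- C1
      intro f
      exact EReal.coe_le_coe_iff.1 (by rw [hPcoe]; exact hupper f)
    · -- C2
      intro f g
      rw [← EReal.coe_le_coe_iff, EReal.coe_add, hPcoe, hPcoe, hPcoe]
      have heq : (fun y => ((f y + g y : ℝ) : EReal)) =
          fun y => eadd ((f y : ℝ) : EReal) ((g y : ℝ) : EReal) := by
        funext y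
        rw [eadd_eq_add (EReal.coe_ne_bot _) (EReal.coe_ne_bot _), EReal.coe_add]
      rw [heq]
      refine le_trans (h2 _ _ (hbddR f) (hbddR g)) ?_
      rw [eadd_eq_add (hne_bot f) (hne_bot g)]
    · -- C3
      intro l hl f
      have heq : (fun y => ((l * f y : ℝ) : EReal)) = fun y => (l : EReal) * ((f y : ℝ) : EReal) := by
        funext y; rw [EReal.coe_mul]
      rw [hPdef]
      simp only
      rw [heq, h3 l hl _ (hbddR f), EReal.toReal_mul, EReal.toReal_coe]
    · -- the limit property
      intro f hf
      obtain ⟨M, hM⟩ := hf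
      set g : ℝ → EReal := fun c => Estar (fun y => min (f y) (c : EReal)) with hgdef
      have hbddcut : ∀ c : ℝ, BddBelowF (fun y => min (f y) (c : EReal)) := by
        intro c
        exact ⟨min M c, fun y =>
          le_min (le_trans (EReal.coe_le_coe_iff.2 (min_le_left _ _)) (hM y))
            (EReal.coe_le_coe_iff.2 (min_le_right _ _))⟩
      have hkey : ∀ c : ℝ, ((P (fun y => (min (f y) (c : EReal)).toReal) : ℝ) : EReal) = g c := by
        intro c
        rw [hPcoe]
        congr 1
        funext y
        exact coe_cutF hM c y
      have hmonog : Monotone g := by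
        intro c c' hcc'
        exact h4 _ _ (hbddcut c) (hbddcut c')
          (fun y => min_le_min le_rfl (EReal.coe_le_coe_iff.2 hcc'))
      have htends : Tendsto g atTop (𝓝 (⨆ c, g c)) := tendsto_atTop_iSup hmonog
      have hsup_le : (⨆ c, g c) ≤ Estar f :=
        iSup_le fun c => h4 _ f (hbddcut c) ⟨M, hM⟩ (fun y => min_le_left _ _)
      -- the reverse inequality via E5
      have hge : Estar f ≤ ⨆ c, g c := by
        set fs : ℕ → Y → EReal := fun n y => min (f y) ((M + n : ℝ) : EReal) - (M : EReal)
          with hfsdef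
        have hMn : ∀ n : ℕ, (M : EReal) ≤ ((M + n : ℝ) : EReal) := by
          intro n
          exact_mod_cast le_add_of_nonneg_right (Nat.cast_nonneg n)
        have hminM : ∀ (n : ℕ) (y : Y), (M : EReal) ≤ min (f y) ((M + n : ℝ) : EReal) :=
          fun n y => le_min (hM y) (hMn n)
        have h0 : ∀ n y, (0 : EReal) ≤ fs n y := by
          intro n y
          show (0 : EReal) ≤ min (f y) ((M + n : ℝ) : EReal) - (M : EReal)
          rw [EReal.le_sub_iff_add_le (Or.inl (EReal.coe_ne_bot M))
            (Or.inl (EReal.coe_ne_top M)), zero_add]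
          exact hminM n y
        have hmonofs : ∀ n y, fs n y ≤ fs (n + 1) y := by
          intro n y
          show min (f y) ((M + n : ℝ) : EReal) - (M : EReal)
            ≤ min (f y) ((M + (n + 1 : ℕ) : ℝ) : EReal) - (M : EReal)
          refine ereal_sub_le_sub M (min_le_min le_rfl ?_)
          exact_mod_cast (by push_cast; linarith : (M + (n : ℝ)) ≤ M + ((n : ℝ) + 1))
        have hlimfs : ∀ y, Tendsto (fun n => fs n y) atTop (𝓝 (f y - (M : EReal))) := by
          intro y
          by_cases hfy : f y = ⊤
          · have heq : ∀ n : ℕ, fs n y = ((n : ℝ) : EReal) := by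
              intro n
              rw [hfsdef]
              simp only
              rw [hfy, min_eq_right (le_top), ← EReal.coe_sub]
              norm_num
            rw [hfy, EReal.top_sub_coe]
            exact Tendsto.congr (fun n => (heq n).symm) tendsto_natCast_ereal_top
          · have hfyb : f y ≠ ⊥ := ((EReal.bot_lt_coe M).trans_le (hM y)).ne'
            obtain ⟨r, hr⟩ : ∃ r : ℝ, f y = (r : EReal) :=
              ⟨(f y).toReal, (EReal.coe_toReal hfy hfyb).symm⟩
            have hev : (fun n : ℕ => fs n y)
                =ᶠ[atTop] (fun _ => ((r : ℝ) : EReal) - (M : EReal)) := by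
              obtain ⟨N, hN⟩ := exists_nat_gt (r - M)
              filter_upwards [eventually_ge_atTop N] with n hn
              show min (f y) ((M + n : ℝ) : EReal) - (M : EReal) = ((r : ℝ) : EReal) - (M : EReal)
              rw [hr, min_eq_left]
              exact_mod_cast (by
                have : (N : ℝ) ≤ n := by exact_mod_cast hn
                linarith : r ≤ M + (n : ℝ))
            refine Tendsto.congr' hev.symm ?_
            rw [hr]
            exact tendsto_const_nhds
        have h5app := h5 fs (fun y => f y - (M : EReal)) h0 hmonofs hlimfs
        -- identify E (fs n) and E (f - M)
        have hEfs : ∀ n : ℕ, Estar (fs n) = g (M + n) - (M : EReal) := by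
          intro n
          have heqn : fs n
              = fun y => min (f y) ((M + n : ℝ) : EReal) + ((-M : ℝ) : EReal) := by
            funext y
            show min (f y) ((M + n : ℝ) : EReal) - (M : EReal) = _
            rw [EReal.coe_neg, sub_eq_add_neg]
          rw [heqn, hshift _ ⟨M, hminM n⟩ (-M), EReal.coe_neg, ← sub_eq_add_neg]
        have hEf : Estar (fun y => f y - (M : EReal)) = Estar f - (M : EReal) := by
          have : (fun y => f y - (M : EReal)) = fun y => f y + ((-M : ℝ) : EReal) := by
            funext y; rw [EReal.coe_neg, sub_eq_add_neg]
          rw [this, hshift f ⟨M, hM⟩ (-M), EReal.coe_neg, ← sub_eq_add_neg]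
        rw [hEf] at h5app
        have hle : Estar f - (M : EReal) ≤ (⨆ c, g c) - (M : EReal) := by
          refine le_of_tendsto h5app (Eventually.of_forall fun n => ?_)
          rw [hEfs n]
          exact ereal_sub_le_sub M (le_iSup g (M + n))
        exact ereal_le_of_sub_le_sub M hle
      have hEq : (⨆ c, g c) = Estar f := le_antisymm hsup_le hge
      rw [← hEq]
      exact Tendsto.congr (fun c => (hkey c).symm) htends
  · -- Backward direction
    rintro ⟨P, ⟨hC1, hC2, hC3⟩, hlim⟩
    have hsupY : ∀ f : Y → ℝ, ∀ y, f y ≤ ⨆ z, f z :=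
      fun f y => le_ciSup (Set.Finite.bddAbove (Set.finite_range f)) y
    have hP0 : P (fun _ => (0 : ℝ)) = 0 := by
      have := hC3 2 two_pos (fun _ => (0 : ℝ))
      simp only [mul_zero] at this
      linarith
    have hPconst : ∀ c : ℝ, P (fun _ => c) = c := by
      intro c
      have hle : P (fun _ => c) ≤ c := le_trans (hC1 _) (le_of_eq ciSup_const)
      have h2 := hC2 (fun _ => c) (fun _ => -c)
      have h3 : (fun (_ : Y) => c + -c) = fun _ => (0 : ℝ) := by funext y; ring
      rw [h3, hP0] at h2
      have h4 : P (fun _ => -c) ≤ -c := le_trans (hC1 _) (le_of_eq ciSup_const)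
      linarith
    have hPmono : ∀ f g : Y → ℝ, (∀ y, f y ≤ g y) → P f ≤ P g := by
      intro f g hfg
      have heq : (fun y => g y + (f y - g y)) = f := by funext y; ring
      have h2 := hC2 g (fun y => f y - g y)
      rw [heq] at h2
      have h3 : P (fun y => f y - g y) ≤ 0 :=
        le_trans (hC1 _) (ciSup_le fun y => sub_nonpos.2 (hfg y))
      linarith
    -- monotone in the cut
    have hcutmono : ∀ (f : Y → EReal) (M : ℝ), (∀ y, (M : EReal) ≤ f y) →
        Monotone (fun c : ℝ => P (cutF f c)) := by
      intro f M hM c c' hcc'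
      refine hPmono _ _ fun y => ?_
      exact EReal.toReal_le_toReal (min_le_min le_rfl (EReal.coe_le_coe_iff.2 hcc'))
        (cut_ne_bot (hM y) c) (cut_ne_top _ _)
    have hcutF_eq : ∀ (f : Y → EReal) (c : ℝ),
        (fun y => (min (f y) (c : EReal)).toReal) = cutF f c := fun _ _ => rfl
    -- the representation lemma
    have hrep : ∀ f : Y → EReal, BddBelowF f →
        Estar f = ⨆ c : ℝ, ((P (cutF f c) : ℝ) : EReal) := by
      intro f hf
      obtain ⟨M, hM⟩ := hf
      have h1 := hlim f ⟨M, hM⟩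
      rw [show (fun c : ℝ => ((P (fun y => (min (f y) (c : EReal)).toReal) : ℝ) : EReal))
          = fun c : ℝ => ((P (cutF f c) : ℝ) : EReal) from rfl] at h1
      have h2 : Tendsto (fun c : ℝ => ((P (cutF f c) : ℝ) : EReal)) atTop
          (𝓝 (⨆ c : ℝ, ((P (cutF f c) : ℝ) : EReal))) :=
        tendsto_atTop_iSup (fun c c' hcc' => EReal.coe_le_coe_iff.2 (hcutmono f M hM hcc'))
      exact tendsto_nhds_unique h1 h2
    have hle_rep : ∀ (f : Y → EReal), BddBelowF f → ∀ c : ℝ,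
        ((P (cutF f c) : ℝ) : EReal) ≤ Estar f := by
      intro f hf c
      rw [hrep f hf]
      exact le_iSup (fun c : ℝ => ((P (cutF f c) : ℝ) : EReal)) c
    have hne_bot : ∀ f : Y → EReal, BddBelowF f → Estar f ≠ ⊥ := by
      intro f hf
      exact ((EReal.bot_lt_coe _).trans_le (hle_rep f hf 0)).ne'
    -- E4 first (used in E5)
    have hE4 : UE4 Estar := by
      intro f g hf hg hfg
      rw [hrep f hf, hrep g hg]
      obtain ⟨M, hM⟩ := hf
      refine iSup_mono fun c => EReal.coe_le_coe_iff.2 (hPmono _ _ fun y => ?_)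
      exact EReal.toReal_le_toReal (min_le_min (hfg y) le_rfl)
        (cut_ne_bot (hM y) c) (cut_ne_top _ _)
    refine ⟨?_, ?_, ?_, hE4, ?_⟩
    · -- E1
      intro k
      have h1 := hlim (fun _ => (k : EReal)) ⟨k, fun _ => le_rfl⟩
      have h2 : Tendsto (fun c : ℝ =>
          ((P (fun y => (min ((k : EReal)) (c : EReal)).toReal) : ℝ) : EReal)) atTop
          (𝓝 ((k : ℝ) : EReal)) := by
        refine Tendsto.congr' ?_ tendsto_const_nhds
        filter_upwards [eventually_ge_atTop k] with c hc
        have : (fun y : Y => (min ((k : EReal)) (c : EReal)).toReal) = fun _ => k := by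
          funext y
          rw [min_eq_left (EReal.coe_le_coe_iff.2 hc), EReal.toReal_coe]
        rw [this, hPconst]
      exact tendsto_nhds_unique h1 h2
    · -- E2
      intro f g hf hg
      obtain ⟨M₁, hM₁⟩ := hf
      obtain ⟨M₂, hM₂⟩ := hg
      have hfb : ∀ y, f y ≠ ⊥ := fun y => ((EReal.bot_lt_coe M₁).trans_le (hM₁ y)).ne'
      have hgb : ∀ y, g y ≠ ⊥ := fun y => ((EReal.bot_lt_coe M₂).trans_le (hM₂ y)).ne'
      have heq : (fun y => eadd (f y) (g y)) = fun y => f y + g y := by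
        funext y; exact eadd_eq_add (hfb y) (hgb y)
      rw [heq]
      have hsum_bdd : BddBelowF (fun y => f y + g y) :=
        ⟨M₁ + M₂, fun y => by rw [EReal.coe_add]; exact add_le_add (hM₁ y) (hM₂ y)⟩
      by_cases htop : Estar f = ⊤ ∨ Estar g = ⊤
      · unfold eadd; rw [if_pos htop]; exact le_top
      · have headd : eadd (Estar f) (Estar g) = Estar f + Estar g :=
          eadd_eq_add (hne_bot f ⟨M₁, hM₁⟩) (hne_bot g ⟨M₂, hM₂⟩)
        rw [headd]
        have htendsum := hlim _ hsum_bdd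
        refine le_of_tendsto htendsum ?_
        filter_upwards [eventually_ge_atTop (M₁ + M₂)] with c hc
        -- the pointwise cut inequality
        have hptwise : ∀ y, (min (f y + g y) (c : EReal)).toReal ≤
            cutF f (c - M₂) y + cutF g (c - M₁) y := by
          intro y
          set a := min (f y) ((c - M₂ : ℝ) : EReal) with hadef
          set b := min (g y) ((c - M₁ : ℝ) : EReal) with hbdef
          have ha_top : a ≠ ⊤ := cut_ne_top _ _
          have ha_bot : a ≠ ⊥ := cut_ne_bot (hM₁ y) _
          have hb_top : b ≠ ⊤ := cut_ne_top _ _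
          have hb_bot : b ≠ ⊥ := cut_ne_bot (hM₂ y) _
          have hkey : min (f y + g y) (c : EReal) ≤ a + b := by
            rcases le_or_gt (f y) ((c - M₂ : ℝ) : EReal) with h | h
            · rcases le_or_gt (g y) ((c - M₁ : ℝ) : EReal) with h' | h'
              · rw [hadef, hbdef, min_eq_left h, min_eq_left h']
                exact min_le_left _ _
              · have hb_eq : b = ((c - M₁ : ℝ) : EReal) := min_eq_right h'.le
                have ha_ge : ((M₁ : ℝ) : EReal) ≤ a :=
                  le_min (hM₁ y) (EReal.coe_le_coe_iff.2 (by linarith))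
                calc min (f y + g y) (c : EReal) ≤ (c : EReal) := min_le_right _ _
                  _ = ((M₁ : ℝ) : EReal) + ((c - M₁ : ℝ) : EReal) := by
                      rw [← EReal.coe_add]; norm_num
                  _ ≤ a + b := by rw [hb_eq]; exact add_le_add ha_ge le_rfl
            · have ha_eq : a = ((c - M₂ : ℝ) : EReal) := min_eq_right h.le
              have hb_ge : ((M₂ : ℝ) : EReal) ≤ b :=
                le_min (hM₂ y) (EReal.coe_le_coe_iff.2 (by linarith))
              calc min (f y + g y) (c : EReal) ≤ (c : EReal) := min_le_right _ _
                _ = ((c - M₂ : ℝ) : EReal) + ((M₂ : ℝ) : EReal) := by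
                    rw [← EReal.coe_add]; norm_num
                _ ≤ a + b := by rw [ha_eq]; exact add_le_add le_rfl hb_ge
          have hab : a + b = ((a.toReal + b.toReal : ℝ) : EReal) := by
            rw [EReal.coe_add, EReal.coe_toReal ha_top ha_bot, EReal.coe_toReal hb_top hb_bot]
          have := EReal.toReal_le_toReal (hab ▸ hkey)
            (cut_ne_bot (show ((M₁ + M₂ : ℝ) : EReal) ≤ f y + g y by
              rw [EReal.coe_add]; exact add_le_add (hM₁ y) (hM₂ y)) c) (EReal.coe_ne_top _)
          rwa [EReal.toReal_coe] at this
        have hP1 : P (fun y => (min (f y + g y) (c : EReal)).toReal) ≤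
            P (cutF f (c - M₂)) + P (cutF g (c - M₁)) :=
          le_trans (hPmono _ _ hptwise) (hC2 _ _)
        calc ((P (fun y => (min (f y + g y) (c : EReal)).toReal) : ℝ) : EReal)
            ≤ ((P (cutF f (c - M₂)) + P (cutF g (c - M₁)) : ℝ) : EReal) :=
              EReal.coe_le_coe_iff.2 hP1
          _ = ((P (cutF f (c - M₂)) : ℝ) : EReal) + ((P (cutF g (c - M₁)) : ℝ) : EReal) :=
              EReal.coe_add _ _
          _ ≤ Estar f + Estar g :=
              add_le_add (hle_rep f ⟨M₁, hM₁⟩ _) (hle_rep g ⟨M₂, hM₂⟩ _)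
    · -- E3
      intro l hl f hf
      obtain ⟨M, hM⟩ := hf
      have hl0 : (0 : EReal) ≤ (l : EReal) := by exact_mod_cast hl.le
      have hbddlf : BddBelowF (fun y => (l : EReal) * f y) :=
        ⟨l * M, fun y => by rw [EReal.coe_mul]; exact mul_le_mul_of_nonneg_left (hM y) hl0⟩
      have h1 := hlim _ hbddlf
      have h1' : Tendsto (fun c : ℝ =>
          ((P (fun y => (min ((l : EReal) * f y) ((l * c : ℝ) : EReal)).toReal) : ℝ) : EReal))
          atTop (𝓝 (Estar (fun y => (l : EReal) * f y))) :=
        h1.comp (Tendsto.const_mul_atTop hl tendsto_id)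
      have hcuteq : ∀ c : ℝ,
          (fun y => (min ((l : EReal) * f y) ((l * c : ℝ) : EReal)).toReal)
            = fun y => l * cutF f c y := by
        intro c
        funext y
        have hmin : min ((l : EReal) * f y) ((l * c : ℝ) : EReal)
            = (l : EReal) * min (f y) (c : EReal) := by
          rw [EReal.coe_mul]
          rcases le_total (f y) ((c : ℝ) : EReal) with h | h
          · rw [min_eq_left h, min_eq_left (mul_le_mul_of_nonneg_left h hl0)]
          · rw [min_eq_right h, min_eq_right (mul_le_mul_of_nonneg_left h hl0)]
        rw [hmin, EReal.toReal_mul, EReal.toReal_coe]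
        rfl
      have h1'' : Tendsto (fun c : ℝ => ((l * P (cutF f c) : ℝ) : EReal))
          atTop (𝓝 (Estar (fun y => (l : EReal) * f y))) := by
        refine Tendsto.congr (fun c => ?_) h1'
        rw [hcuteq c, hC3 l hl (cutF f c)]
      have h2 := hlim f ⟨M, hM⟩
      have h2' : Tendsto (fun c : ℝ => ((l : EReal) * ((P (cutF f c) : ℝ) : EReal)))
          atTop (𝓝 ((l : EReal) * Estar f)) := by
        have hc : ContinuousAt (fun p : EReal × EReal => p.1 * p.2) ((l : EReal), Estar f) := by
          have hlne : ((l : ℝ) : EReal) ≠ 0 := ne_of_gt (by exact_mod_cast hl)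
          refine EReal.continuousAt_mul ?_ ?_ ?_ ?_
          · exact Or.inl hlne
          · exact Or.inl hlne
          · exact Or.inl (EReal.coe_ne_bot l)
          · exact Or.inl (EReal.coe_ne_top l)
        exact hc.tendsto.comp (tendsto_const_nhds.prodMk_nhds h2)
      have h2'' : Tendsto (fun c : ℝ => ((l * P (cutF f c) : ℝ) : EReal))
          atTop (𝓝 ((l : EReal) * Estar f)) := by
        refine Tendsto.congr (fun c => ?_) h2'
        rw [EReal.coe_mul]
      exact tendsto_nhds_unique h1'' h2''
    · -- E5
      intro fs f h0 hstep hptw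
      have hfsmono : ∀ n m : ℕ, n ≤ m → ∀ y, fs n y ≤ fs m y := by
        intro n m hnm y
        exact monotone_nat_of_le_succ (f := fun k => fs k y) (fun k => hstep k y) hnm
      have hfle : ∀ n y, fs n y ≤ f y := by
        intro n y
        refine ge_of_tendsto (hptw y) ?_
        filter_upwards [eventually_ge_atTop n] with m hm
        exact hfsmono n m hm y
      have hf0 : ∀ y, (0 : EReal) ≤ f y := fun y => le_trans (h0 0 y) (hfle 0 y)
      have hbddfs : ∀ n, BddBelowF (fs n) := fun n => ⟨0, fun y => by
        rw [EReal.coe_zero]; exact h0 n y⟩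
      have hbddf : BddBelowF f := ⟨0, fun y => by rw [EReal.coe_zero]; exact hf0 y⟩
      have hmonoE : Monotone (fun n => Estar (fs n)) := by
        intro n m hnm
        exact hE4 _ _ (hbddfs n) (hbddfs m) (hfsmono n m hnm)
      have htend : Tendsto (fun n => Estar (fs n)) atTop (𝓝 (⨆ n, Estar (fs n))) :=
        tendsto_atTop_iSup hmonoE
      suffices hS : (⨆ n, Estar (fs n)) = Estar f by rw [← hS]; exact htend
      refine le_antisymm (iSup_le fun n => hE4 _ _ (hbddfs n) hbddf (hfle n)) ?_
      rw [hrep f hbddf]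
      refine iSup_le fun c => ?_
      set S := ⨆ n, Estar (fs n) with hSdef
      -- S is not ⊥
      have hSnb : S ≠ ⊥ := by
        have : ((P (cutF (fs 0) 0) : ℝ) : EReal) ≤ S :=
          le_trans (hle_rep (fs 0) (hbddfs 0) 0) (le_iSup (fun n => Estar (fs n)) 0)
        exact ((EReal.bot_lt_coe _).trans_le this).ne'
      by_cases hStop : S = ⊤
      · rw [hStop]; exact le_top
      -- key: for every ε > 0, P (cutF f c) ≤ S + ε
      have hkey : ∀ ε : ℝ, 0 < ε → ((P (cutF f c) : ℝ) : EReal) ≤ S + (ε : EReal) := by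
        intro ε hε
        have hconv : ∀ y, Tendsto (fun n => cutF (fs n) c y) atTop (𝓝 (cutF f c y)) := by
          intro y
          have hmin : Tendsto (fun n => min (fs n y) (c : EReal)) atTop
              (𝓝 (min (f y) (c : EReal))) := (hptw y).min tendsto_const_nhds
          exact (EReal.tendsto_toReal (cut_ne_top _ _)
            (cut_ne_bot (by rw [EReal.coe_zero]; exact hf0 y) c)).comp hmin
        have hev : ∀ᶠ n in atTop, ∀ y, cutF f c y ≤ cutF (fs n) c y + ε := by
          rw [eventually_all]
          intro y
          filter_upwards [(hconv y).eventually
            (eventually_gt_nhds (show cutF f c y - ε < cutF f c y by linarith))] with n hn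
          linarith
        obtain ⟨n, hn⟩ := hev.exists
        have hP1 : P (cutF f c) ≤ P (cutF (fs n) c) + ε := by
          calc P (cutF f c) ≤ P (fun y => cutF (fs n) c y + ε) := hPmono _ _ hn
            _ ≤ P (cutF (fs n) c) + P (fun _ => ε) := hC2 _ _
            _ = P (cutF (fs n) c) + ε := by rw [hPconst]
        calc ((P (cutF f c) : ℝ) : EReal) ≤ ((P (cutF (fs n) c) + ε : ℝ) : EReal) :=
            EReal.coe_le_coe_iff.2 hP1
          _ = ((P (cutF (fs n) c) : ℝ) : EReal) + (ε : EReal) := EReal.coe_add _ _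
          _ ≤ S + (ε : EReal) := add_le_add
              (le_trans (hle_rep (fs n) (hbddfs n) c) (le_iSup (fun k => Estar (fs k)) n)) le_rfl
      lift S to ℝ using ⟨hStop, hSnb⟩ with s hs
      rw [EReal.coe_le_coe_iff]
      by_contra hcon
      push_neg at hcon
      have := hkey ((P (cutF f c) - s) / 2) (by linarith)
      rw [← EReal.coe_add, EReal.coe_le_coe_iff] at this
      linarith
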